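/- Let G be a connected graph on n vertices, x a vertex of G with exactly three neighbors, y and z two distinct neighbors of x, and c ≥ 0 an integer; let G' be the associated terminal-augmented graph with terminals s and t. Then G has a Hamiltonian cycle if and only if G' contains an st-path P with |V(P)| ≤ n + 2 and |N_{G'}(V(P))| ≤ c. -/

import Mathlib

open SimpleGraph

/-- The open neighborhood of a vertex set `S`: vertices outside `S` adjacent to some
vertex of `S`. -/
def openNbhd {V : Type*} (G : SimpleGraph V) (S : Set V) : Set V :=
  {v | v ∉ S ∧ ∃ w ∈ S, G.Adj v w}

/-- The terminal-augmented graph `G'` of `(G, x, y, z, c)`: a new vertex `s`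
(modelled as `Sum.inr (Sum.inl ())`) adjacent exactly to `x`, a new vertex `t`
(modelled as `Sum.inr (Sum.inr (Sum.inl ()))`) adjacent exactly to `y` and `z`,
and `c` new vertices (the set `Z`, modelled as `Sum.inr (Sum.inr (Sum.inr i))`)
each adjacent exactly to `s`. -/
def termAug {V : Type*} (G : SimpleGraph V) (x y z : V) (c : ℕ) :
    SimpleGraph (V ⊕ (Unit ⊕ Unit ⊕ Fin c)) :=
  SimpleGraph.fromRel (fun a b =>
    match a, b with
    | Sum.inl v, Sum.inl w => G.Adj v w
    | Sum.inl v, Sum.inr (Sum.inl _) => v = x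
    | Sum.inl v, Sum.inr (Sum.inr (Sum.inl _)) => v = y ∨ v = z
    | Sum.inr (Sum.inl _), Sum.inr (Sum.inr (Sum.inr _)) => True
    | _, _ => False)

/-- The terminal `s` of the terminal-augmented graph. -/
def sVert (V : Type*) (c : ℕ) : V ⊕ (Unit ⊕ Unit ⊕ Fin c) := Sum.inr (Sum.inl ())

/-- The terminal `t` of the terminal-augmented graph. -/
def tVert (V : Type*) (c : ℕ) : V ⊕ (Unit ⊕ Unit ⊕ Fin c) := Sum.inr (Sum.inr (Sum.inl ()))

/-- `G` has a Hamiltonian cycle. -/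
def HasHamiltonianCycle {V : Type*} [DecidableEq V] (G : SimpleGraph V) : Prop :=
  ∃ (v : V) (p : G.Walk v v), p.IsHamiltonianCycle

section Aux

variable {V : Type*} {G : SimpleGraph V} {x y z : V} {c : ℕ}

lemma termAug_adj_inl_inl {v w : V} :
    (termAug G x y z c).Adj (Sum.inl v) (Sum.inl w) ↔ G.Adj v w := by
  constructor
  · intro h
    rw [termAug, fromRel_adj] at h
    rcases h with ⟨-, h | h⟩
    · exact h
    · exact h.symm
  · intro h
    rw [termAug, fromRel_adj]
    exact ⟨fun e => h.ne (Sum.inl.inj e), Or.inl h⟩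

lemma eq_of_adj_s {u : V ⊕ (Unit ⊕ Unit ⊕ Fin c)}
    (h : (termAug G x y z c).Adj (sVert V c) u) :
    u = Sum.inl x ∨ ∃ i, u = Sum.inr (Sum.inr (Sum.inr i)) := by
  rw [termAug, fromRel_adj, sVert] at h
  obtain ⟨hne, h | h⟩ := h
  · rcases u with v | (u1 | u1 | i)
    · exact h.elim
    · exact h.elim
    · exact h.elim
    · exact Or.inr ⟨i, rfl⟩
  · rcases u with v | (u1 | u1 | i)
    · exact Or.inl (by rw [h])
    · cases u1; exact (hne rfl).elim
    · exact h.elim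
    · exact h.elim

lemma eq_of_adj_t {u : V ⊕ (Unit ⊕ Unit ⊕ Fin c)}
    (h : (termAug G x y z c).Adj u (tVert V c)) :
    u = Sum.inl y ∨ u = Sum.inl z := by
  rw [termAug, fromRel_adj, tVert] at h
  obtain ⟨hne, h | h⟩ := h
  · rcases u with v | (u1 | u1 | i)
    · rcases h with rfl | rfl
      · exact Or.inl rfl
      · exact Or.inr rfl
    · exact h.elim
    · exact h.elim
    · exact h.elim
  · rcases u with v | (u1 | u1 | i)
    · exact h.elim
    · exact h.elim
    · exact h.elim
    · exact h.elim

lemma eq_of_adj_z {u : V ⊕ (Unit ⊕ Unit ⊕ Fin c)} {i : Fin c}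
    (h : (termAug G x y z c).Adj (Sum.inr (Sum.inr (Sum.inr i))) u) :
    u = sVert V c := by
  rw [termAug, fromRel_adj] at h
  obtain ⟨hne, h | h⟩ := h
  · rcases u with v | (u1 | u1 | j)
    · exact h.elim
    · exact h.elim
    · exact h.elim
    · exact h.elim
  · rcases u with v | (u1 | u1 | j)
    · exact h.elim
    · cases u1; rfl
    · exact h.elim
    · exact h.elim

lemma adj_s_x : (termAug G x y z c).Adj (sVert V c) (Sum.inl x) := by
  rw [termAug, fromRel_adj]
  exact ⟨by simp [sVert], Or.inr rfl⟩

lemma adj_inl_t {v : V} (h : v = y ∨ v = z) :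
    (termAug G x y z c).Adj (Sum.inl v) (tVert V c) := by
  rw [termAug, fromRel_adj]
  exact ⟨by simp [tVert], Or.inl h⟩

lemma adj_s_z (i : Fin c) :
    (termAug G x y z c).Adj (sVert V c) (Sum.inr (Sum.inr (Sum.inr i))) := by
  rw [termAug, fromRel_adj]
  exact ⟨by simp [sVert], Or.inl trivial⟩

def homInl (G : SimpleGraph V) (x y z : V) (c : ℕ) : G →g termAug G x y z c :=
  ⟨Sum.inl, fun h => termAug_adj_inl_inl.mpr h⟩

end Aux

section Generic

variable {α : Type*} {H : SimpleGraph α}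

lemma exists_adj_pred {a b v : α} (q : H.Walk a b) (hv : v ∈ q.support) (hne : v ≠ a) :
    ∃ w ∈ q.support, H.Adj w v := by
  induction q with
  | nil =>
    rw [SimpleGraph.Walk.support_nil, List.mem_singleton] at hv
    exact absurd hv hne
  | @cons u m b h q ih =>
    rw [SimpleGraph.Walk.support_cons, List.mem_cons] at hv
    rcases hv with rfl | hv
    · exact absurd rfl hne
    · by_cases hvm : v = m
      · subst hvm
        exact ⟨u, by simp, h⟩
      · obtain ⟨w, hw, hadj⟩ := ih hv hvm
        exact ⟨w, by rw [SimpleGraph.Walk.support_cons]; exact List.mem_cons_of_mem _ hw, hadj⟩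

lemma exists_boundary (S : Set α) {a b : α} (w : H.Walk a b) (ha : a ∉ S) (hb : b ∈ S) :
    ∃ u ∈ w.support, u ∉ S ∧ ∃ w' ∈ S, H.Adj u w' := by
  induction w with
  | nil => exact absurd hb ha
  | @cons u m b h q ih =>
    by_cases hm : m ∈ S
    · exact ⟨u, by simp, ha, m, hm, h⟩
    · obtain ⟨u', hu', h1, h2⟩ := ih hm hb
      exact ⟨u', by rw [SimpleGraph.Walk.support_cons]; exact List.mem_cons_of_mem _ hu', h1, h2⟩

lemma loop_path_eq_nil {a : α} {w : H.Walk a a} (hw : w.IsPath) : w = SimpleGraph.Walk.nil := by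
  cases w with
  | nil => rfl
  | cons h q =>
    rw [SimpleGraph.Walk.cons_isPath_iff] at hw
    exact absurd q.end_mem_support hw.2

lemma hamCycle_rotate [DecidableEq α] {v u : α} {C : H.Walk v v}
    (hC : C.IsHamiltonianCycle) (hu : u ∈ C.support) : (C.rotate u hu).IsHamiltonianCycle := by
  rw [SimpleGraph.Walk.isHamiltonianCycle_iff_isCycle_and_support_count_tail_eq_one] at hC ⊢
  refine ⟨hC.1.rotate hu, fun a => ?_⟩
  rw [(SimpleGraph.Walk.support_rotate C u hu).perm.count_eq]
  exact hC.2 a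

lemma support_length_eq_card [Fintype α] {a b : α} {q : H.Walk a b}
    (h1 : q.IsPath) (h2 : ∀ w, w ∈ q.support) : q.support.length = Fintype.card α := by
  classical
  rw [← List.toFinset_card_of_nodup h1.support_nodup,
    show q.support.toFinset = Finset.univ from Finset.eq_univ_iff_forall.mpr
      (fun w => List.mem_toFinset.mpr (h2 w)), Finset.card_univ]

end Generic
section Aux2

variable {V : Type*} {G : SimpleGraph V} {x y z : V} {c : ℕ}

lemma exists_preimage_walk {a' b' : V ⊕ (Unit ⊕ Unit ⊕ Fin c)}
    (r : (termAug G x y z c).Walk a' b') :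
    ∀ (_ : ∀ u ∈ r.support, ∃ v, u = Sum.inl v) (a b : V),
      a' = Sum.inl a → b' = Sum.inl b →
      ∃ r0 : G.Walk a b, r0.support.map Sum.inl = r.support := by
  induction r with
  | nil =>
    intro _ a b ha hb
    subst ha
    obtain rfl : a = b := Sum.inl.inj hb
    exact ⟨SimpleGraph.Walk.nil, by simp⟩
  | @cons u m b' h q ih =>
    intro hall a b ha hb
    obtain ⟨vm, hvm⟩ := hall m (by simp)
    subst ha hvm
    obtain ⟨r0, hr0⟩ := ih (fun u hu => hall u (by simp [hu])) vm b rfl hb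
    exact ⟨SimpleGraph.Walk.cons (termAug_adj_inl_inl.mp h) r0, by
      rw [SimpleGraph.Walk.support_cons, SimpleGraph.Walk.support_cons, List.map_cons, hr0]⟩

lemma four_le_card [Fintype V] (hx : (G.neighborSet x).ncard = 3) : 4 ≤ Fintype.card V := by
  have h1 : x ∉ G.neighborSet x := by simp
  have h2 : (insert x (G.neighborSet x)).ncard = 4 := by
    rw [Set.ncard_insert_of_notMem h1 (Set.toFinite _), hx]
  calc 4 = (insert x (G.neighborSet x)).ncard := h2.symm
    _ ≤ (Set.univ : Set V).ncard := Set.ncard_le_ncard (Set.subset_univ _) (Set.toFinite _)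
    _ = Fintype.card V := by rw [Set.ncard_univ, Nat.card_eq_fintype_card]

lemma mem_pair_of_adj [Fintype V] (hx : (G.neighborSet x).ncard = 3) (hy : G.Adj x y)
    (hz : G.Adj x z) (hyz : y ≠ z) {a b : V} (ha : G.Adj x a) (hb : G.Adj x b) (hab : a ≠ b) :
    (a = y ∨ a = z) ∨ (b = y ∨ b = z) := by
  by_contra hcon
  push_neg at hcon
  obtain ⟨⟨h1, h2⟩, h3, h4⟩ := hcon
  have hsub : ({y, z, a, b} : Set V) ⊆ G.neighborSet x := by
    intro u hu
    rcases hu with rfl | rfl | rfl | rfl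
    exacts [hy, hz, ha, hb]
  have hcard : ({y, z, a, b} : Set V).ncard = 4 := by
    rw [Set.ncard_insert_of_notMem (by
        simp only [Set.mem_insert_iff, Set.mem_singleton_iff, not_or]
        exact ⟨hyz, fun e => h1 e.symm, fun e => h3 e.symm⟩) (Set.toFinite _),
      Set.ncard_insert_of_notMem (by
        simp only [Set.mem_insert_iff, Set.mem_singleton_iff, not_or]
        exact ⟨fun e => h2 e.symm, fun e => h4 e.symm⟩) (Set.toFinite _),
      Set.ncard_insert_of_notMem (by simpa using hab) (Set.toFinite _),
      Set.ncard_singleton]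
  have := Set.ncard_le_ncard hsub (Set.toFinite _)
  omega

end Aux2
section Aux3

open SimpleGraph.Walk

variable {V : Type*} {G : SimpleGraph V} {x y z : V}

lemma exists_hamPath [Fintype V] [DecidableEq V] (hx : (G.neighborSet x).ncard = 3)
    (hy : G.Adj x y) (hz : G.Adj x z) (hyz : y ≠ z)
    (hham : ∃ (v : V) (p : G.Walk v v), p.IsHamiltonianCycle) :
    ∃ a, (a = y ∨ a = z) ∧ ∃ q : G.Walk x a, q.IsPath ∧ ∀ w, w ∈ q.support := by
  obtain ⟨v, C0, hC0⟩ := hham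
  have hxs : x ∈ C0.support := hC0.mem_support x
  have hC : (C0.rotate x hxs).IsHamiltonianCycle := hamCycle_rotate hC0 hxs
  obtain ⟨a, ha, q, hq⟩ := not_nil_iff.mp hC.isCycle.not_nil
  rw [hq] at hC
  have hqpath : q.IsPath := ((cons_isCycle_iff q ha).mp hC.isCycle).1
  have hqcov : ∀ w, w ∈ q.support := by
    intro w
    have h := hC.isHamiltonian_tail.mem_support w
    rwa [support_tail_of_not_nil _ not_nil_cons, support_cons, List.tail_cons] at h
  have hlen : 2 ≤ q.length := by
    have h3 := hC.isCycle.three_le_length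
    rw [length_cons] at h3
    omega
  have hrnn : ¬ q.reverse.Nil := by
    rw [not_nil_iff_lt_length, length_reverse]
    omega
  obtain ⟨b, hb, r2, hr2⟩ := not_nil_iff.mp hrnn
  have hrpath : q.reverse.IsPath := hqpath.reverse
  have hrcov : ∀ w, w ∈ q.reverse.support := by
    intro w
    rw [support_reverse, List.mem_reverse]
    exact hqcov w
  have hr2path : r2.IsPath ∧ x ∉ r2.support := by
    rw [hr2, cons_isPath_iff] at hrpath
    exact hrpath
  have hab : a ≠ b := by
    rintro rfl
    have h0 : r2 = SimpleGraph.Walk.nil := loop_path_eq_nil hr2path.1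
    have hl : q.reverse.length = 1 := by rw [hr2, h0]; simp
    rw [length_reverse] at hl
    omega
  rcases mem_pair_of_adj hx hy hz hyz ha hb hab with h | h
  · exact ⟨a, h, q.reverse, hrpath, hrcov⟩
  · refine ⟨b, h, SimpleGraph.Walk.cons ha r2.reverse, ?_, ?_⟩
    · rw [cons_isPath_iff]
      refine ⟨hr2path.1.reverse, ?_⟩
      rw [support_reverse, List.mem_reverse]
      exact hr2path.2
    · intro w
      have hw := hrcov w
      rw [hr2, support_cons, List.mem_cons] at hw
      rw [support_cons, List.mem_cons, support_reverse, List.mem_reverse]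
      exact hw

end Aux3
section Fwd

open SimpleGraph.Walk

variable {V : Type*} {G : SimpleGraph V} {x y z : V} {c : ℕ}

@[simp] lemma homInl_coe : ⇑(homInl G x y z c) = Sum.inl := rfl

lemma ncard_range_z :
    (Set.range fun i : Fin c => (Sum.inr (Sum.inr (Sum.inr i)) : V ⊕ (Unit ⊕ Unit ⊕ Fin c))).ncard
      = c := by
  rw [← Set.image_univ, Set.ncard_image_of_injective _ (fun i j h => by simpa using h),
    Set.ncard_univ, Nat.card_eq_fintype_card, Fintype.card_fin]

lemma forward_dir [Fintype V] [DecidableEq V] (hx : (G.neighborSet x).ncard = 3)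
    (hy : G.Adj x y) (hz : G.Adj x z) (hyz : y ≠ z)
    (hham : ∃ (v : V) (p : G.Walk v v), p.IsHamiltonianCycle) :
    ∃ p : (termAug G x y z c).Walk (sVert V c) (tVert V c), p.IsPath ∧
      p.support.length ≤ Fintype.card V + 2 ∧
      (openNbhd (termAug G x y z c) {a | a ∈ p.support}).ncard ≤ c := by
  obtain ⟨a, hayz, Q, hQpath, hQcov⟩ := exists_hamPath hx hy hz hyz hham
  set Q' : (termAug G x y z c).Walk (Sum.inl x) (Sum.inl a) := Q.map (homInl G x y z c)
    with hQ'def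
  have hQ'supp : Q'.support = Q.support.map Sum.inl := by
    rw [hQ'def]; exact Walk.support_map (homInl G x y z c) Q
  set P : (termAug G x y z c).Walk (sVert V c) (tVert V c) :=
    SimpleGraph.Walk.cons adj_s_x
      ((SimpleGraph.Walk.cons (adj_inl_t hayz).symm Q'.reverse).reverse) with hPdef
  have hsupp : P.support = sVert V c :: (Q.support.map Sum.inl ++ [tVert V c]) := by
    rw [hPdef, support_cons, support_reverse, support_cons, List.reverse_cons,
      support_reverse, List.reverse_reverse, hQ'supp]
  have hpath : P.IsPath := by
    rw [hPdef, cons_isPath_iff]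
    constructor
    · apply SimpleGraph.Walk.IsPath.reverse
      rw [cons_isPath_iff]
      refine ⟨(map_isPath_of_injective Sum.inl_injective hQpath).reverse, ?_⟩
      rw [support_reverse, List.mem_reverse, hQ'supp]
      simp [tVert]
    · rw [support_reverse, List.mem_reverse, support_cons, List.mem_cons]
      push_neg
      refine ⟨by simp [sVert, tVert], ?_⟩
      rw [support_reverse, List.mem_reverse, hQ'supp]
      simp [sVert]
  refine ⟨P, hpath, ?_, ?_⟩
  · rw [hsupp]
    simp only [List.length_cons, List.length_append, List.length_map, List.length_singleton]
    rw [support_length_eq_card hQpath hQcov]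
    simp
  · refine le_trans (Set.ncard_le_ncard ?_ (Set.toFinite _)) (le_of_eq ncard_range_z)
    rintro u ⟨huS, w, hwS, hadj⟩
    rcases u with v | (u1 | u1 | i)
    · exact absurd (show Sum.inl v ∈ P.support by
        rw [hsupp]
        exact List.mem_cons_of_mem _ (List.mem_append_left _
          (List.mem_map.mpr ⟨v, hQcov v, rfl⟩))) huS
    · cases u1; exact absurd P.start_mem_support huS
    · cases u1; exact absurd P.end_mem_support huS
    · exact ⟨i, rfl⟩

end Fwd
section Bwd

open SimpleGraph.Walk

variable {V : Type*} {G : SimpleGraph V} {x y z : V} {c : ℕ}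

lemma backward_dir [Fintype V] [DecidableEq V] (hG : G.Connected)
    (hx : (G.neighborSet x).ncard = 3) (hy : G.Adj x y) (hz : G.Adj x z) (hyz : y ≠ z)
    {p : (termAug G x y z c).Walk (sVert V c) (tVert V c)} (hpath : p.IsPath)
    (hnb : (openNbhd (termAug G x y z c) {a | a ∈ p.support}).ncard ≤ c) :
    ∃ (v : V) (q : G.Walk v v), q.IsHamiltonianCycle := by
  have hn4 : 4 ≤ Fintype.card V := four_le_card hx
  have hst : (sVert V c : V ⊕ (Unit ⊕ Unit ⊕ Fin c)) ≠ tVert V c := by simp [sVert, tVert]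
  obtain ⟨u, hsu, p1, hp1⟩ := not_nil_iff.mp (not_nil_of_ne hst (p := p))
  have hu : u = Sum.inl x := by
    rcases eq_of_adj_s hsu with h | ⟨i, rfl⟩
    · exact h
    · exfalso
      have hzt : (Sum.inr (Sum.inr (Sum.inr i)) : V ⊕ (Unit ⊕ Unit ⊕ Fin c)) ≠ tVert V c := by
        simp [tVert]
      obtain ⟨u2, hzu, p2, hp2⟩ := not_nil_iff.mp (not_nil_of_ne hzt (p := p1))
      have hu2 : u2 = sVert V c := eq_of_adj_z hzu
      have hs1 : sVert V c ∉ p1.support := by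
        rw [hp1, cons_isPath_iff] at hpath
        exact hpath.2
      refine hs1 ?_
      rw [hp2, support_cons]
      refine List.mem_cons_of_mem _ ?_
      rw [← hu2]
      exact p2.start_mem_support
  subst hu
  rw [hp1] at hpath hnb
  have hp1path : p1.IsPath ∧ sVert V c ∉ p1.support := (cons_isPath_iff _ _).mp hpath
  have hzns : ∀ i : Fin c, (Sum.inr (Sum.inr (Sum.inr i)) : V ⊕ (Unit ⊕ Unit ⊕ Fin c)) ∉
      (SimpleGraph.Walk.cons hsu p1).support := by
    intro i hmem
    rw [support_cons, List.mem_cons] at hmem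
    rcases hmem with h | hmem
    · simp [sVert] at h
    · obtain ⟨w, hw, hadj⟩ := exists_adj_pred p1 hmem (by simp)
      have hws : w = sVert V c := eq_of_adj_z hadj.symm
      rw [hws] at hw
      exact hp1path.2 hw
  have hsub : (Set.range fun i : Fin c =>
      (Sum.inr (Sum.inr (Sum.inr i)) : V ⊕ (Unit ⊕ Unit ⊕ Fin c))) ⊆
      openNbhd (termAug G x y z c) {a | a ∈ (SimpleGraph.Walk.cons hsu p1).support} := by
    rintro u ⟨i, rfl⟩
    exact ⟨hzns i, sVert V c, (SimpleGraph.Walk.cons hsu p1).start_mem_support, (adj_s_z i).symm⟩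
  have hNZ : openNbhd (termAug G x y z c) {a | a ∈ (SimpleGraph.Walk.cons hsu p1).support} =
      Set.range fun i : Fin c => (Sum.inr (Sum.inr (Sum.inr i)) : V ⊕ (Unit ⊕ Unit ⊕ Fin c)) :=
    (Set.eq_of_subset_of_ncard_le hsub (by rw [ncard_range_z]; exact hnb) (Set.toFinite _)).symm
  have hinl : ∀ v : V, Sum.inl v ∈ (SimpleGraph.Walk.cons hsu p1).support := by
    intro v
    by_contra hv
    obtain ⟨w0⟩ := hG.preconnected v x
    obtain ⟨u, hu_mem, huS, w', hw'S, hadj⟩ := exists_boundary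
      {a | a ∈ (SimpleGraph.Walk.cons hsu p1).support} (w0.map (homInl G x y z c))
      (by exact hv)
      (by show Sum.inl x ∈ {a | a ∈ (SimpleGraph.Walk.cons hsu p1).support}
          rw [Set.mem_setOf_eq, support_cons]
          exact List.mem_cons_of_mem _ p1.start_mem_support)
    have hmem2 : u ∈ openNbhd (termAug G x y z c)
        {a | a ∈ (SimpleGraph.Walk.cons hsu p1).support} := ⟨huS, w', hw'S, hadj⟩
    rw [hNZ] at hmem2
    obtain ⟨i, hi⟩ := hmem2
    rw [Walk.support_map, List.mem_map] at hu_mem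
    obtain ⟨v', -, rfl⟩ := hu_mem
    simp [homInl] at hi
  have hclass : ∀ u ∈ (SimpleGraph.Walk.cons hsu p1).support,
      u = sVert V c ∨ u = tVert V c ∨ ∃ v, u = Sum.inl v := by
    intro u hu
    rcases u with v | (u1 | u1 | i)
    · exact Or.inr (Or.inr ⟨v, rfl⟩)
    · cases u1; exact Or.inl rfl
    · cases u1; exact Or.inr (Or.inl rfl)
    · exact absurd hu (hzns i)
  have htx : (tVert V c : V ⊕ (Unit ⊕ Unit ⊕ Fin c)) ≠ Sum.inl x := by simp [tVert]
  obtain ⟨u, htu, r, hr⟩ := not_nil_iff.mp (not_nil_of_ne htx (p := p1.reverse))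
  obtain ⟨a0, ha0, rfl⟩ : ∃ a0, (a0 = y ∨ a0 = z) ∧ u = Sum.inl a0 := by
    rcases eq_of_adj_t htu.symm with h | h
    · exact ⟨y, Or.inl rfl, h⟩
    · exact ⟨z, Or.inr rfl, h⟩
  have hrev : r.IsPath ∧ tVert V c ∉ r.support := by
    have h0 : p1.reverse.IsPath := hp1path.1.reverse
    rw [hr, cons_isPath_iff] at h0
    exact h0
  have hrsub : ∀ u' ∈ r.support, u' ∈ p1.support := by
    intro u' hu'
    have h1 : u' ∈ p1.reverse.support := by
      rw [hr, support_cons]; exact List.mem_cons_of_mem _ hu'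
    rwa [support_reverse, List.mem_reverse] at h1
  have hsr : sVert V c ∉ r.support := fun h => hp1path.2 (hrsub _ h)
  have hall : ∀ u' ∈ r.support, ∃ v, u' = Sum.inl v := by
    intro u' hu'
    rcases hclass u' (by rw [support_cons]; exact List.mem_cons_of_mem _ (hrsub _ hu'))
      with rfl | rfl | h
    · exact absurd hu' hsr
    · exact absurd hu' hrev.2
    · exact h
  obtain ⟨r0, hr0⟩ := exists_preimage_walk r hall a0 x rfl rfl
  have hr0nodup : r0.support.Nodup := by
    have h1 := hrev.1.support_nodup
    rw [← hr0] at h1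
    exact List.Nodup.of_map _ h1
  have hr0path : r0.IsPath := SimpleGraph.Walk.IsPath.mk' hr0nodup
  have hr0cov : ∀ v : V, v ∈ r0.support := by
    intro v
    have h1 : Sum.inl v ∈ r.support := by
      have h2 := hinl v
      rw [support_cons, List.mem_cons] at h2
      rcases h2 with h2 | h2
      · simp [sVert] at h2
      · have h3 : Sum.inl v ∈ p1.reverse.support := by
          rw [support_reverse, List.mem_reverse]; exact h2
        rw [hr, support_cons, List.mem_cons] at h3
        rcases h3 with h3 | h3
        · simp [tVert] at h3
        · exact h3
    rw [← hr0, List.mem_map] at h1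
    obtain ⟨v', hv', he⟩ := h1
    exact (Sum.inl.inj he) ▸ hv'
  have hxa0 : G.Adj x a0 := by rcases ha0 with rfl | rfl; exacts [hy, hz]
  have hlen0 : r0.support.length = Fintype.card V := support_length_eq_card hr0path hr0cov
  have hedge : s(x, a0) ∉ r0.edges := by
    intro he
    have he' : s(x, a0) ∈ r0.reverse.edges := by
      rw [edges_reverse, List.mem_reverse]; exact he
    have hrrpath : r0.reverse.IsPath := hr0path.reverse
    obtain ⟨m, hxm, w2, hw2⟩ := not_nil_iff.mp (not_nil_of_ne hxa0.ne (p := r0.reverse))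
    rw [hw2, cons_isPath_iff] at hrrpath
    rw [hw2, edges_cons] at he'
    rcases List.mem_cons.mp he' with h1 | h1
    · have hma : m = a0 := by
        rcases Sym2.eq_iff.mp h1 with ⟨-, h⟩ | ⟨h, -⟩
        · exact h.symm
        · exact absurd h hxm.ne
      subst hma
      have hw2nil : w2 = SimpleGraph.Walk.nil := loop_path_eq_nil hrrpath.1
      have hl1 : r0.reverse.length = 1 := by rw [hw2, hw2nil]; simp
      rw [length_reverse] at hl1
      have hl2 : r0.support.length = 2 := by rw [length_support, hl1]
      omega
    · exact hrrpath.2 (w2.fst_mem_support_of_mem_edges h1)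
  have hcyc : (SimpleGraph.Walk.cons hxa0 r0).IsCycle :=
    (cons_isCycle_iff r0 hxa0).mpr ⟨hr0path, hedge⟩
  refine ⟨x, SimpleGraph.Walk.cons hxa0 r0, ?_⟩
  rw [isHamiltonianCycle_iff_isCycle_and_support_count_tail_eq_one]
  refine ⟨hcyc, fun a => ?_⟩
  rw [support_cons, List.tail_cons]
  exact le_antisymm (List.nodup_iff_count_le_one.mp hr0nodup a)
    (List.count_pos_iff.mpr (hr0cov a))

end Bwd

/-- `G` has a Hamiltonian cycle iff the terminal-augmented graph `G'` contains an
`st`-path `P` with `|V(P)| ≤ n + 2` and `|N_{G'}(V(P))| ≤ c`. -/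
theorem stmt_4 {V : Type*} [Fintype V] [DecidableEq V] (G : SimpleGraph V)
    (hG : G.Connected) (x y z : V) (hx : (G.neighborSet x).ncard = 3)
    (hy : G.Adj x y) (hz : G.Adj x z) (hyz : y ≠ z) (c : ℕ) :
    HasHamiltonianCycle G ↔
      ∃ p : (termAug G x y z c).Walk (sVert V c) (tVert V c), p.IsPath ∧
        p.support.length ≤ Fintype.card V + 2 ∧
        (openNbhd (termAug G x y z c) {a | a ∈ p.support}).ncard ≤ c := by
  constructor
  · intro hham
    exact forward_dir (c := c) hx hy hz hyz hham
  · rintro ⟨p, h1, h2, h3⟩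
    exact backward_dir hG hx hy hz hyz h1 h3
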